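/- Let g : ℝ^d → ℝ^d be C¹ with g and its partial derivatives of polynomial growth, and let T(x) = x + g(x). Then for every θ ∈ ℝ^d, E_θ [2 div g(X) + |g(X)|² + d] = E_θ |T(X) − θ|², where X ∼ N(θ, I_d). -/

import Mathlib

open MeasureTheory Real RealInnerProductSpace Filter

noncomputable def diverg {d : ℕ} (g : EuclideanSpace ℝ (Fin d) → EuclideanSpace ℝ (Fin d))
    (x : EuclideanSpace ℝ (Fin d)) : ℝ :=
  ∑ i, fderiv ℝ g x (EuclideanSpace.single i 1) i

noncomputable def laplacian {d : ℕ} (f : EuclideanSpace ℝ (Fin d) → ℝ)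
    (x : EuclideanSpace ℝ (Fin d)) : ℝ :=
  diverg (gradient f) x

noncomputable def gaussPdf {d : ℕ} (θ x : EuclideanSpace ℝ (Fin d)) : ℝ :=
  (2 * Real.pi) ^ (-(d : ℝ) / 2) * Real.exp (-‖x - θ‖ ^ 2 / 2)

lemma gaussPdf_pos {d : ℕ} (θ x : EuclideanSpace ℝ (Fin d)) : 0 < gaussPdf θ x := by
  unfold gaussPdf; positivity

lemma gaussPdf_continuous {d : ℕ} (θ : EuclideanSpace ℝ (Fin d)) :
    Continuous (gaussPdf θ) := by
  unfold gaussPdf; fun_prop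

lemma gauss_hasFDerivAt {d : ℕ} (θ x : EuclideanSpace ℝ (Fin d)) :
    HasFDerivAt (gaussPdf θ) ((-(gaussPdf θ x)) • (innerSL ℝ (x - θ))) x := by
  have h1 : HasFDerivAt (fun y : EuclideanSpace ℝ (Fin d) => y - θ)
      (ContinuousLinearMap.id ℝ _) x := (hasFDerivAt_id x).sub_const θ
  have h2 := h1.norm_sq
  have h3 := (h2.const_mul ((-1 : ℝ)/2)).exp.const_mul ((2 * Real.pi) ^ (-(d : ℝ) / 2))
  have heq : gaussPdf θ = fun y : EuclideanSpace ℝ (Fin d) =>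
      (2 * Real.pi) ^ (-(d : ℝ) / 2) * Real.exp ((-1 : ℝ)/2 * ‖y - θ‖ ^ 2) := by
    funext y; unfold gaussPdf; ring_nf
  rw [heq]
  refine h3.congr_fderiv ?_
  ext v
  simp only [ContinuousLinearMap.coe_smul', Pi.smul_apply, innerSL_apply_apply, smul_eq_mul,
    ContinuousLinearMap.coe_comp', Function.comp_apply, ContinuousLinearMap.coe_id', id_eq,
    ContinuousLinearMap.smul_apply, nsmul_eq_mul, Nat.cast_ofNat]
  ring_nf

lemma gauss_fderiv_apply {d : ℕ} (θ x : EuclideanSpace ℝ (Fin d)) (i : Fin d) :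
    fderiv ℝ (gaussPdf θ) x (EuclideanSpace.single i 1) = -((x i - θ i) * gaussPdf θ x) := by
  rw [(gauss_hasFDerivAt θ x).fderiv]
  simp [real_inner_comm, EuclideanSpace.inner_single_left, EuclideanSpace.inner_single_right]
  ring

lemma integrable_exp_gauss {d : ℕ} :
    Integrable (fun x : EuclideanSpace ℝ (Fin d) => Real.exp (-(1/8) * ‖x‖ ^ 2)) := by
  have h := (GaussianFourier.integrable_cexp_neg_mul_sq_norm_add
      (V := EuclideanSpace ℝ (Fin d)) (b := (1/8 : ℂ)) (by norm_num) 0 0).norm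
  convert h using 2 with x
  rw [Complex.norm_exp]
  norm_cast
  simp [Complex.add_re, Complex.mul_re]
  rw [← Complex.ofReal_pow, Complex.ofReal_re]

lemma integrable_poly_gauss {d : ℕ} (θ : EuclideanSpace ℝ (Fin d)) (s : ℝ) :
    Integrable (fun x : EuclideanSpace ℝ (Fin d) => (1 + ‖x‖) ^ s * gaussPdf θ x) := by
  set c := (2 * Real.pi) ^ (-(d : ℝ) / 2) with hc
  have hcpos : 0 < c := by positivity
  set K := c * Real.exp (2 * s ^ 2 + ‖θ‖ ^ 2 / 2) with hK
  apply ((integrable_exp_gauss (d := d)).const_mul K).mono'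
  · apply Continuous.aestronglyMeasurable
    apply Continuous.mul ?_ (gaussPdf_continuous θ)
    apply Continuous.rpow_const (by fun_prop)
    intro x; left; positivity
  · filter_upwards with x
    have ht : (0:ℝ) ≤ ‖x‖ := norm_nonneg _
    have htθ : ‖x‖ ≤ ‖x - θ‖ + ‖θ‖ := by
      simpa using norm_add_le (x - θ) θ
    have hlog : Real.log (1 + ‖x‖) ≤ ‖x‖ := by
      have := Real.log_le_sub_one_of_pos (x := 1 + ‖x‖) (by positivity)
      linarith
    have hlog0 : 0 ≤ Real.log (1 + ‖x‖) := Real.log_nonneg (by linarith)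
    have hr : (1 + ‖x‖) ^ s = Real.exp (s * Real.log (1 + ‖x‖)) := by
      rw [Real.rpow_def_of_pos (by positivity), mul_comm]
    have habs : s * Real.log (1 + ‖x‖) ≤ |s| * ‖x‖ := by
      calc s * Real.log (1 + ‖x‖) ≤ |s| * Real.log (1 + ‖x‖) :=
            mul_le_mul_of_nonneg_right (le_abs_self s) hlog0
        _ ≤ |s| * ‖x‖ := mul_le_mul_of_nonneg_left hlog (abs_nonneg s)
    have key : s * Real.log (1 + ‖x‖) + (-‖x - θ‖ ^ 2 / 2) ≤
        2 * s ^ 2 + ‖θ‖ ^ 2 / 2 + (-(1/8) * ‖x‖ ^ 2) := by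
      have h1 : |s| * ‖x‖ ≤ 2 * s ^ 2 + ‖x‖ ^ 2 / 8 := by
        nlinarith [sq_nonneg (‖x‖ - 4 * |s|), sq_abs s]
      have h2 : ‖x‖ ^ 2 ≤ 2 * ‖x - θ‖ ^ 2 + 2 * ‖θ‖ ^ 2 := by
        have h3 := mul_le_mul htθ htθ ht (by positivity)
        nlinarith [sq_nonneg (‖x - θ‖ - ‖θ‖)]
      nlinarith
    have hgp := gaussPdf_pos θ x
    have hnorm : ‖(1 + ‖x‖) ^ s * gaussPdf θ x‖ = (1 + ‖x‖) ^ s * gaussPdf θ x := by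
      rw [Real.norm_eq_abs, abs_of_nonneg]
      positivity
    rw [hnorm, hr]
    unfold gaussPdf
    rw [hK, ← hc]
    rw [mul_comm (Real.exp _) (c * _), mul_assoc, mul_assoc, ← Real.exp_add, ← Real.exp_add]
    apply mul_le_mul_of_nonneg_left _ hcpos.le
    · exact Real.exp_le_exp.2 (by linarith)

lemma integrable_dom {d : ℕ} (θ : EuclideanSpace ℝ (Fin d)) {f : EuclideanSpace ℝ (Fin d) → ℝ}
    (hf : Continuous f) (K s : ℝ) (hb : ∀ x, |f x| ≤ K * (1 + ‖x‖) ^ s) :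
    Integrable (fun x => f x * gaussPdf θ x) := by
  apply ((integrable_poly_gauss θ s).const_mul K).mono'
    ((hf.mul (gaussPdf_continuous θ)).aestronglyMeasurable)
  filter_upwards with x
  have hgp := (gaussPdf_pos θ x).le
  rw [Real.norm_eq_abs, Pi.mul_apply, abs_mul, abs_of_nonneg hgp, ← mul_assoc]
  exact mul_le_mul_of_nonneg_right (hb x) hgp

lemma abs_coord_le {d : ℕ} (v : EuclideanSpace ℝ (Fin d)) (i : Fin d) : |v i| ≤ ‖v‖ := by
  have h := abs_real_inner_le_norm (EuclideanSpace.single i (1:ℝ)) v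
  simpa [EuclideanSpace.inner_single_left, EuclideanSpace.norm_single] using h

lemma stein_coord {d : ℕ} (θ : EuclideanSpace ℝ (Fin d)) {u : EuclideanSpace ℝ (Fin d) → ℝ}
    (i : Fin d) (hu : Differentiable ℝ u)
    (hu'c : Continuous fun x => fderiv ℝ u x (EuclideanSpace.single i 1))
    (K s : ℝ)
    (hb : ∀ x, |u x| + |fderiv ℝ u x (EuclideanSpace.single i 1)| ≤ K * (1 + ‖x‖) ^ s) :
    ∫ x, gaussPdf θ x * fderiv ℝ u x (EuclideanSpace.single i 1) =
      ∫ x, (x i - θ i) * u x * gaussPdf θ x := by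
  have hb1 : ∀ x, |u x| ≤ K * (1 + ‖x‖) ^ s :=
    fun x => le_trans (le_add_of_nonneg_right (abs_nonneg _)) (hb x)
  have hb2 : ∀ x, |fderiv ℝ u x (EuclideanSpace.single i 1)| ≤ K * (1 + ‖x‖) ^ s :=
    fun x => le_trans (le_add_of_nonneg_left (abs_nonneg _)) (hb x)
  have I1 : Integrable (fun x => gaussPdf θ x * fderiv ℝ u x (EuclideanSpace.single i 1)) := by
    have h := integrable_dom θ hu'c K s hb2
    exact h.congr (Filter.Eventually.of_forall fun x => mul_comm _ _)
  have I3 : Integrable (fun x => gaussPdf θ x * u x) := by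
    have h := integrable_dom θ hu.continuous K s hb1
    exact h.congr (Filter.Eventually.of_forall fun x => mul_comm _ _)
  have I2 : Integrable
      (fun x => fderiv ℝ (gaussPdf θ) x (EuclideanSpace.single i 1) * u x) := by
    have hc : Continuous fun x : EuclideanSpace ℝ (Fin d) => -(x i - θ i) * u x := by
      have : Continuous fun x : EuclideanSpace ℝ (Fin d) => x i :=
        (EuclideanSpace.proj (𝕜 := ℝ) i).continuous
      have hu' := hu.continuous
      fun_prop
    have h := integrable_dom θ hc (K * (1 + ‖θ‖)) (s + 1) ?_
    · apply h.congr (Filter.Eventually.of_forall fun x => ?_)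
      rw [gauss_fderiv_apply]; ring
    · intro x
      have h1 : |x i - θ i| ≤ ‖x‖ + ‖θ‖ := by
        have h2 : |(x - θ) i| ≤ ‖x - θ‖ := abs_coord_le (x - θ) i
        have h3 : (x - θ) i = x i - θ i := rfl
        have h4 : ‖x - θ‖ ≤ ‖x‖ + ‖θ‖ := norm_sub_le x θ
        rw [h3] at h2; linarith
      have h5 : (0:ℝ) < 1 + ‖x‖ := by positivity
      rw [Real.rpow_add_one (ne_of_gt h5)]
      have hKx : (0:ℝ) ≤ K * (1 + ‖x‖) ^ s := le_trans (abs_nonneg _) (hb1 x)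
      have h6 : |(-(x i - θ i)) * u x| ≤ (‖x‖ + ‖θ‖) * (K * (1 + ‖x‖) ^ s) := by
        rw [abs_mul, abs_neg]
        exact mul_le_mul h1 (hb1 x) (abs_nonneg _) (by positivity)
      have h7 : ‖x‖ + ‖θ‖ ≤ (1 + ‖θ‖) * (1 + ‖x‖) := by
        nlinarith [norm_nonneg x, norm_nonneg θ]
      calc |(-(x i - θ i)) * u x| ≤ (‖x‖ + ‖θ‖) * (K * (1 + ‖x‖) ^ s) := h6
        _ ≤ ((1 + ‖θ‖) * (1 + ‖x‖)) * (K * (1 + ‖x‖) ^ s) := by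
            apply mul_le_mul_of_nonneg_right h7 hKx
        _ = K * (1 + ‖θ‖) * ((1 + ‖x‖) ^ s * (1 + ‖x‖)) := by ring
  have hφdiff : Differentiable ℝ (gaussPdf θ) :=
    fun x => (gauss_hasFDerivAt θ x).differentiableAt
  have key := integral_mul_fderiv_eq_neg_fderiv_mul_of_integrable
    (f := gaussPdf θ) (g := u) (v := EuclideanSpace.single i 1) I2 I1 I3 (fun x _ => hφdiff x) (fun x _ => hu x)
  rw [key, ← integral_neg]
  congr 1
  funext x
  rw [gauss_fderiv_apply]
  ring

theorem stmt_6 {d : ℕ} (g : EuclideanSpace ℝ (Fin d) → EuclideanSpace ℝ (Fin d))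
    (hg : ContDiff ℝ 1 g)
    (hgrowth : ∃ C r : ℝ, 0 < C ∧ 0 < r ∧ ∀ x,
      ‖g x‖ + ‖fderiv ℝ g x‖ ≤ C * (1 + ‖x‖) ^ r)
    (T : EuclideanSpace ℝ (Fin d) → EuclideanSpace ℝ (Fin d))
    (hT : ∀ x, T x = x + g x) (θ : EuclideanSpace ℝ (Fin d)) :
    ∫ x, (2 * diverg g x + ‖g x‖ ^ 2 + d) * gaussPdf θ x =
      ∫ x, ‖T x - θ‖ ^ 2 * gaussPdf θ x := by
  obtain ⟨C, r, hC, hr, hCr⟩ := hgrowth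
  set φ := gaussPdf θ with hφ
  have hgdiff : Differentiable ℝ g := hg.differentiable one_ne_zero
  have hgcont : Continuous g := hgdiff.continuous
  have hfdcont : Continuous (fderiv ℝ g) := hg.continuous_fderiv one_ne_zero
  -- coordinate functions
  have hproj : ∀ i : Fin d, Continuous fun x : EuclideanSpace ℝ (Fin d) => x i :=
    fun i => (EuclideanSpace.proj (𝕜 := ℝ) i).continuous
  have hudiff : ∀ i : Fin d, Differentiable ℝ (fun x => g x i) := by
    intro i
    exact fun x => ((EuclideanSpace.proj (𝕜 := ℝ) i).differentiableAt).comp x (hgdiff x)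
  have hufd : ∀ (i : Fin d) x v, fderiv ℝ (fun y => g y i) x v = fderiv ℝ g x v i := by
    intro i x v
    have h : HasFDerivAt (fun y => g y i)
        ((EuclideanSpace.proj (𝕜 := ℝ) i).comp (fderiv ℝ g x)) x :=
      ((EuclideanSpace.proj (𝕜 := ℝ) i).hasFDerivAt).comp x (hgdiff x).hasFDerivAt
    rw [h.fderiv]
    rfl
  have hfdapply : ∀ i : Fin d,
      Continuous fun x => fderiv ℝ g x (EuclideanSpace.single i 1) i := by
    intro i
    have h1 : Continuous fun x => fderiv ℝ g x (EuclideanSpace.single i 1) :=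
      (ContinuousLinearMap.apply ℝ (EuclideanSpace ℝ (Fin d))
        (EuclideanSpace.single i 1)).continuous.comp hfdcont
    exact (hproj i).comp h1
  have hbnd : ∀ (i : Fin d) x,
      |g x i| + |fderiv ℝ g x (EuclideanSpace.single i 1) i| ≤ C * (1 + ‖x‖) ^ r := by
    intro i x
    have h1 : |g x i| ≤ ‖g x‖ := abs_coord_le _ i
    have h2 : |fderiv ℝ g x (EuclideanSpace.single i 1) i| ≤
        ‖fderiv ℝ g x (EuclideanSpace.single i 1)‖ := abs_coord_le _ i
    have h3 : ‖fderiv ℝ g x (EuclideanSpace.single i 1)‖ ≤ ‖fderiv ℝ g x‖ := by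
      calc ‖fderiv ℝ g x (EuclideanSpace.single i 1)‖
          ≤ ‖fderiv ℝ g x‖ * ‖EuclideanSpace.single i (1:ℝ)‖ := (fderiv ℝ g x).le_opNorm _
        _ = ‖fderiv ℝ g x‖ := by rw [EuclideanSpace.norm_single, norm_one, mul_one]
    have := hCr x
    linarith
  -- IBP for the coordinates of g
  have stein_g : ∀ i : Fin d,
      ∫ x, φ x * fderiv ℝ g x (EuclideanSpace.single i 1) i =
        ∫ x, (x i - θ i) * g x i * φ x := by
    intro i
    have hc : Continuous fun x => fderiv ℝ (fun y => g y i) x (EuclideanSpace.single i 1) := by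
      have heq : (fun x => fderiv ℝ (fun y => g y i) x (EuclideanSpace.single i 1)) =
          fun x => fderiv ℝ g x (EuclideanSpace.single i 1) i :=
        funext fun x => hufd i x _
      rw [heq]; exact hfdapply i
    have h := stein_coord θ i (hudiff i) hc C r (fun x => by
      rw [hufd i x]; exact hbnd i x)
    have e1 : (fun x => φ x * fderiv ℝ (fun y => g y i) x (EuclideanSpace.single i 1)) =
        fun x => φ x * fderiv ℝ g x (EuclideanSpace.single i 1) i :=
      funext fun x => by rw [hufd i x]
    rw [e1] at h
    exact h
  -- IBP for the linear coordinates
  have stein_lin : ∀ i : Fin d, ∫ x, φ x = ∫ x, (x i - θ i) ^ 2 * φ x := by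
    intro i
    have hudiff' : Differentiable ℝ (fun x : EuclideanSpace ℝ (Fin d) => x i - θ i) :=
      fun x => ((EuclideanSpace.proj (𝕜 := ℝ) i).differentiableAt).sub_const (θ i)
    have hufd' : ∀ x, fderiv ℝ (fun y : EuclideanSpace ℝ (Fin d) => y i - θ i) x
        (EuclideanSpace.single i 1) = 1 := by
      intro x
      have h : HasFDerivAt (fun y : EuclideanSpace ℝ (Fin d) => y i - θ i)
          (EuclideanSpace.proj (𝕜 := ℝ) i) x :=
        ((EuclideanSpace.proj (𝕜 := ℝ) i).hasFDerivAt).sub_const (θ i)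
      rw [h.fderiv]
      simp [EuclideanSpace.proj]
    have hc : Continuous fun x : EuclideanSpace ℝ (Fin d) =>
        fderiv ℝ (fun y : EuclideanSpace ℝ (Fin d) => y i - θ i) x
          (EuclideanSpace.single i 1) := by
      simp only [hufd']; exact continuous_const
    have hbnd' : ∀ x : EuclideanSpace ℝ (Fin d),
        |x i - θ i| + |fderiv ℝ (fun y : EuclideanSpace ℝ (Fin d) => y i - θ i) x
          (EuclideanSpace.single i 1)| ≤ (2 + ‖θ‖) * (1 + ‖x‖) ^ (1:ℝ) := by
      intro x
      rw [hufd' x, Real.rpow_one]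
      have h1 : |x i - θ i| ≤ ‖x‖ + ‖θ‖ := by
        have h2 : |(x - θ) i| ≤ ‖x - θ‖ := abs_coord_le (x - θ) i
        have h4 : ‖x - θ‖ ≤ ‖x‖ + ‖θ‖ := norm_sub_le x θ
        exact le_trans h2 h4
      have := norm_nonneg x
      have := norm_nonneg θ
      rw [abs_one]
      nlinarith
    have h := stein_coord θ i hudiff' hc (2 + ‖θ‖) 1 hbnd'
    simp only [hufd', mul_one] at h
    rw [h]
    congr 1
    funext x
    ring
  -- integrability of all the pieces
  have Iφ : Integrable φ := by
    have h := integrable_dom θ (continuous_const : Continuous fun _ : EuclideanSpace ℝ (Fin d) => (1:ℝ))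
      1 0 (fun x => by simp)
    simpa using h
  have IA : ∀ i : Fin d, Integrable fun x => φ x * fderiv ℝ g x (EuclideanSpace.single i 1) i := by
    intro i
    have h := integrable_dom θ (hfdapply i) C r (fun x => by
      have := hbnd i x
      have := abs_nonneg (g x i)
      linarith)
    exact h.congr (Filter.Eventually.of_forall fun x => mul_comm _ _)
  have IB : ∀ i : Fin d, Integrable fun x => (x i - θ i) * g x i * φ x := by
    intro i
    have hc : Continuous fun x : EuclideanSpace ℝ (Fin d) => (x i - θ i) * g x i := by
      have h1 := hproj i
      have h2 : Continuous fun x : EuclideanSpace ℝ (Fin d) => g x i := (hproj i).comp hgcont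
      fun_prop
    apply integrable_dom θ hc (C * (1 + ‖θ‖)) (r + 1)
    intro x
    have h5 : (0:ℝ) < 1 + ‖x‖ := by positivity
    rw [Real.rpow_add_one (ne_of_gt h5)]
    have h1 : |x i - θ i| ≤ ‖x‖ + ‖θ‖ :=
      le_trans (abs_coord_le (x - θ) i) (norm_sub_le x θ)
    have hg1 : |g x i| ≤ C * (1 + ‖x‖) ^ r := by
      have := hbnd i x
      have := abs_nonneg (fderiv ℝ g x (EuclideanSpace.single i 1) i)
      linarith
    have hKx : (0:ℝ) ≤ C * (1 + ‖x‖) ^ r := le_trans (abs_nonneg _) hg1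
    have h7 : ‖x‖ + ‖θ‖ ≤ (1 + ‖θ‖) * (1 + ‖x‖) := by
      nlinarith [norm_nonneg x, norm_nonneg θ]
    calc |(x i - θ i) * g x i| ≤ (‖x‖ + ‖θ‖) * (C * (1 + ‖x‖) ^ r) := by
          rw [abs_mul]
          exact mul_le_mul h1 hg1 (abs_nonneg _) (by positivity)
      _ ≤ ((1 + ‖θ‖) * (1 + ‖x‖)) * (C * (1 + ‖x‖) ^ r) :=
          mul_le_mul_of_nonneg_right h7 hKx
      _ = C * (1 + ‖θ‖) * ((1 + ‖x‖) ^ r * (1 + ‖x‖)) := by ring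
  have Ig2 : Integrable fun x => ‖g x‖ ^ 2 * φ x := by
    apply integrable_dom θ (by fun_prop) (C ^ 2) (2 * r)
    intro x
    have h1 : ‖g x‖ ≤ C * (1 + ‖x‖) ^ r := by
      have := hCr x
      have := norm_nonneg (fderiv ℝ g x)
      linarith
    have h5 : (0:ℝ) < 1 + ‖x‖ := by positivity
    have h2 : ((1 + ‖x‖) ^ r) ^ 2 = (1 + ‖x‖) ^ (2 * r) := by
      rw [← Real.rpow_natCast ((1 + ‖x‖) ^ r) 2, ← Real.rpow_mul h5.le]
      norm_num
      ring_nf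
    calc |‖g x‖ ^ 2| = ‖g x‖ ^ 2 := abs_of_nonneg (by positivity)
      _ ≤ (C * (1 + ‖x‖) ^ r) ^ 2 := by
          apply sq_le_sq' _ h1
          have := norm_nonneg (g x)
          have : (0:ℝ) ≤ C * (1 + ‖x‖) ^ r := le_trans (norm_nonneg (g x)) h1
          linarith [norm_nonneg (g x)]
      _ = C ^ 2 * (1 + ‖x‖) ^ (2 * r) := by rw [mul_pow, h2]
  have Ix2 : ∀ i : Fin d, Integrable fun x => (x i - θ i) ^ 2 * φ x := by
    intro i
    have hc : Continuous fun x : EuclideanSpace ℝ (Fin d) => (x i - θ i) ^ 2 := by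
      have h1 := hproj i
      fun_prop
    apply integrable_dom θ hc ((1 + ‖θ‖) ^ 2) 2
    intro x
    have h1 : |x i - θ i| ≤ ‖x‖ + ‖θ‖ :=
      le_trans (abs_coord_le (x - θ) i) (norm_sub_le x θ)
    have h7 : ‖x‖ + ‖θ‖ ≤ (1 + ‖θ‖) * (1 + ‖x‖) := by
      nlinarith [norm_nonneg x, norm_nonneg θ]
    have h5 : (0:ℝ) < 1 + ‖x‖ := by positivity
    have h8 : (1 + ‖x‖) ^ (2:ℝ) = (1 + ‖x‖) ^ (2:ℕ) := by
      rw [← Real.rpow_natCast (1 + ‖x‖) 2]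
      norm_num
    rw [h8]
    calc |(x i - θ i) ^ 2| = |x i - θ i| ^ 2 := (abs_pow _ 2)
      _ ≤ ((1 + ‖θ‖) * (1 + ‖x‖)) ^ 2 := by
          apply sq_le_sq' _ (le_trans h1 h7)
          have h9 : (0:ℝ) ≤ (1 + ‖θ‖) * (1 + ‖x‖) := by positivity
          linarith [abs_nonneg (x i - θ i)]
      _ = (1 + ‖θ‖) ^ 2 * (1 + ‖x‖) ^ 2 := by ring
  -- expand both integrands and use linearity
  calc ∫ x, (2 * diverg g x + ‖g x‖ ^ 2 + (d:ℝ)) * φ x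
      = ∫ x, ((∑ i, 2 * (φ x * fderiv ℝ g x (EuclideanSpace.single i 1) i)) +
          (‖g x‖ ^ 2 * φ x + (d:ℝ) * φ x)) := by
        congr 1; funext x
        unfold diverg
        have hs : (2 * ∑ i, fderiv ℝ g x (EuclideanSpace.single i 1) i) * φ x
            = ∑ i, 2 * (φ x * fderiv ℝ g x (EuclideanSpace.single i 1) i) := by
          rw [mul_comm (2:ℝ), mul_assoc, Finset.sum_mul]
          exact Finset.sum_congr rfl fun i _ => by ring
        rw [add_mul, add_mul, hs, add_assoc]
    _ = (∑ i, 2 * ∫ x, φ x * fderiv ℝ g x (EuclideanSpace.single i 1) i) +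
        ((∫ x, ‖g x‖ ^ 2 * φ x) + (d:ℝ) * ∫ x, φ x) := by
        have J1 : Integrable (fun x => ∑ i, 2 * (φ x * fderiv ℝ g x (EuclideanSpace.single i 1) i)) :=
          integrable_finset_sum _ fun i _ => ((IA i).const_mul 2)
        have J2 : Integrable (fun x => ‖g x‖ ^ 2 * φ x + (d:ℝ) * φ x) :=
          Ig2.add (Iφ.const_mul (d:ℝ))
        rw [integral_add J1 J2,
          integral_finset_sum _ fun i _ => (IA i).const_mul 2,
          integral_add Ig2 (Iφ.const_mul (d:ℝ))]
        simp_rw [MeasureTheory.integral_const_mul]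
    _ = (∑ i, 2 * ∫ x, (x i - θ i) * g x i * φ x) +
        ((∫ x, ‖g x‖ ^ 2 * φ x) + ∑ i, ∫ x, (x i - θ i) ^ 2 * φ x) := by
        congr 1
        · exact Finset.sum_congr rfl fun i _ => by rw [stein_g i]
        · congr 1
          rw [show (∑ i : Fin d, ∫ x, (x i - θ i) ^ 2 * φ x) = ∑ _i : Fin d, ∫ x, φ x from
              Finset.sum_congr rfl fun i _ => (stein_lin i).symm,
            Finset.sum_const, Finset.card_univ, Fintype.card_fin, nsmul_eq_mul]
    _ = ∫ x, ((∑ i, 2 * ((x i - θ i) * g x i * φ x)) +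
          (‖g x‖ ^ 2 * φ x + ∑ i, (x i - θ i) ^ 2 * φ x)) := by
        have J3 : Integrable (fun x => ∑ i, 2 * ((x i - θ i) * g x i * φ x)) :=
          integrable_finset_sum _ fun i _ => ((IB i).const_mul 2)
        have J5 : Integrable (fun x => ∑ i, (x i - θ i) ^ 2 * φ x) :=
          integrable_finset_sum _ fun i _ => Ix2 i
        have J4 : Integrable (fun x => ‖g x‖ ^ 2 * φ x + ∑ i, (x i - θ i) ^ 2 * φ x) :=
          Ig2.add J5
        rw [integral_add J3 J4,
          integral_finset_sum _ fun i _ => (IB i).const_mul 2,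
          integral_add Ig2 J5,
          integral_finset_sum _ fun i _ => Ix2 i]
        simp_rw [MeasureTheory.integral_const_mul]
    _ = ∫ x, ‖T x - θ‖ ^ 2 * φ x := by
        congr 1; funext x
        have hTx : T x - θ = (x - θ) + g x := by rw [hT x]; abel
        have hinner : (inner ℝ (x - θ) (g x) : ℝ) = ∑ i, (x i - θ i) * g x i := by
          rw [PiLp.inner_apply]
          exact Finset.sum_congr rfl fun i _ => by
            simp [RCLike.inner_apply]
            ring
        have hnorm2 : ‖x - θ‖ ^ 2 = ∑ i, (x i - θ i) ^ 2 := by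
          rw [← real_inner_self_eq_norm_sq, PiLp.inner_apply]
          exact Finset.sum_congr rfl fun i _ => by
            simp [RCLike.inner_apply]
        have hs2 : (2 * ∑ i, (x i - θ i) * g x i) * φ x
            = ∑ i, 2 * ((x i - θ i) * g x i * φ x) := by
          rw [mul_comm (2:ℝ), mul_assoc, Finset.sum_mul]
          exact Finset.sum_congr rfl fun i _ => by ring
        rw [hTx, norm_add_sq_real, hinner, hnorm2, add_mul, add_mul, Finset.sum_mul, hs2]
        ring
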